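/- For every integer m ≥ 1, Σ_{n=0}^{m} C(m,n) · 𝓑_n(1/2) · B_{m-n} = m · Σ_{n=0}^{m-1} (n!/2^{n+1}) · y(n,1/2) · S₂(m-1,n). -/

import Mathlib

/-- The numbers `y(n,λ)` from the paper:
`y(n,λ) = ∑_{j=0}^{n} (-1)^n / ((j+1) · λ^{j+1} · (λ-1)^{n+1-j})`. -/
noncomputable def ynum (n : ℕ) (l : ℝ) : ℝ :=
  ∑ j ∈ Finset.range (n + 1),
    (-1 : ℝ) ^ n / ((j + 1) * l ^ (j + 1) * (l - 1) ^ (n + 1 - j))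

/-- The Stirling numbers of the second kind,
`S₂(n,k) = (1/k!)·∑_{c=0}^{k} (-1)^{k-c}·C(k,c)·c^n`. -/
def S2 (n k : ℕ) : ℚ :=
  (1 / (k.factorial : ℚ)) *
    ∑ c ∈ Finset.range (k + 1), (-1 : ℚ) ^ (k - c) * (k.choose c : ℚ) * (c : ℚ) ^ n

/-- The Apostol–Bernoulli numbers `𝓑_n(λ)`: `𝓑_0(λ) = 0` and for `n ≥ 1`,
`𝓑_n(λ) = (n·λ/(λ-1)^n)·∑_{c=0}^{n-1} (-1)^c·c!·λ^{c-1}·(λ-1)^{n-1-c}·S₂(n-1,c)`. -/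
noncomputable def apostolBernoulli (n : ℕ) (l : ℝ) : ℝ :=
  if n = 0 then 0
  else ((n : ℝ) * l / (l - 1) ^ n) *
    ∑ c ∈ Finset.range n, (-1 : ℝ) ^ c * (c.factorial : ℝ) * l ^ ((c : ℤ) - 1) *
      (l - 1) ^ (n - 1 - c) * (S2 (n - 1) c : ℝ)


open Finset

/-- auxiliary numerator sum -/
def Tq (n k : ℕ) : ℚ :=
  ∑ c ∈ Finset.range (k + 1), (-1 : ℚ) ^ (k - c) * (k.choose c : ℚ) * (c : ℚ) ^ n

lemma S2_eq_Tq (n k : ℕ) : S2 n k = 1 / (k.factorial : ℚ) * Tq n k := rfl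

/-- auxiliary shifted sum -/
def Vq (n k : ℕ) : ℚ :=
  ∑ d ∈ Finset.range (k + 1), (-1 : ℚ) ^ (k - d) * (k.choose d : ℚ) * ((d + 1 : ℕ) : ℚ) ^ n

lemma choose_succ_succ_mul (k d : ℕ) :
    (((k + 1).choose (d + 1) : ℚ)) * ((d : ℚ) + 1) = ((k : ℚ) + 1) * (k.choose d : ℚ) := by
  have h := (Nat.add_one_mul_choose_eq k d).symm
  exact_mod_cast congrArg (fun x : ℕ => (x : ℚ)) h

lemma Tq_succ_succ (n k : ℕ) : Tq (n + 1) (k + 1) = ((k : ℚ) + 1) * Vq n k := by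
  rw [Tq, Finset.sum_range_succ', Vq, Finset.mul_sum]
  simp only [Nat.cast_zero, zero_pow (Nat.succ_ne_zero n), mul_zero, add_zero]
  refine Finset.sum_congr rfl fun d hd => ?_
  have hs : k + 1 - (d + 1) = k - d := Nat.succ_sub_succ k d
  rw [hs]
  have h := choose_succ_succ_mul k d
  push_cast
  calc (-1 : ℚ) ^ (k - d) * ((k + 1).choose (d + 1) : ℚ) * ((d : ℚ) + 1) ^ (n + 1)
      = (-1 : ℚ) ^ (k - d) * ((((k + 1).choose (d + 1) : ℚ)) * ((d : ℚ) + 1)) * ((d : ℚ) + 1) ^ n := by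
        ring
    _ = _ := by rw [h]; ring

lemma Tq_add (n k : ℕ) : Tq n (k + 1) + Tq n k = Vq n k := by
  have e1 : Tq n (k + 1) = (∑ d ∈ Finset.range (k + 1),
      (-1 : ℚ) ^ (k + 1 - (d + 1)) * ((k + 1).choose (d + 1) : ℚ) * ((d + 1 : ℕ) : ℚ) ^ n)
      + (-1 : ℚ) ^ (k + 1 - 0) * ((k + 1).choose 0 : ℚ) * ((0 : ℕ) : ℚ) ^ n := by
    rw [Tq]; exact Finset.sum_range_succ' _ _
  have e2 : Tq n k = (∑ d ∈ Finset.range (k + 1),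
      (-1 : ℚ) ^ (k - (d + 1)) * (k.choose (d + 1) : ℚ) * ((d + 1 : ℕ) : ℚ) ^ n)
      + (-1 : ℚ) ^ (k - 0) * (k.choose 0 : ℚ) * ((0 : ℕ) : ℚ) ^ n := by
    rw [Tq]
    rw [Finset.sum_range_succ'
      (fun c => (-1 : ℚ) ^ (k - c) * (k.choose c : ℚ) * ((c : ℕ) : ℚ) ^ n) k]
    rw [Finset.sum_range_succ
      (fun d => (-1 : ℚ) ^ (k - (d + 1)) * (k.choose (d + 1) : ℚ) * ((d + 1 : ℕ) : ℚ) ^ n) k]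
    simp [Nat.choose_succ_self]
  rw [e1, e2, Vq]
  have hz : (-1 : ℚ) ^ (k + 1 - 0) * ((k + 1).choose 0 : ℚ) * ((0 : ℕ) : ℚ) ^ n
      + (-1 : ℚ) ^ (k - 0) * (k.choose 0 : ℚ) * ((0 : ℕ) : ℚ) ^ n = 0 := by
    simp only [Nat.sub_zero, Nat.choose_zero_right, Nat.cast_one, mul_one]
    rw [pow_succ]
    ring
  have key : ∀ d ∈ Finset.range (k + 1),
      ((-1 : ℚ) ^ (k + 1 - (d + 1)) * ((k + 1).choose (d + 1) : ℚ) * ((d + 1 : ℕ) : ℚ) ^ n)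
        + ((-1 : ℚ) ^ (k - (d + 1)) * (k.choose (d + 1) : ℚ) * ((d + 1 : ℕ) : ℚ) ^ n)
      = (-1 : ℚ) ^ (k - d) * (k.choose d : ℚ) * ((d + 1 : ℕ) : ℚ) ^ n := by
    intro d hd
    rw [Finset.mem_range] at hd
    have hs : k + 1 - (d + 1) = k - d := Nat.succ_sub_succ k d
    rw [hs]
    have hp : ((k + 1).choose (d + 1) : ℚ) = (k.choose d : ℚ) + (k.choose (d + 1) : ℚ) := by
      rw [Nat.choose_succ_succ]; push_cast; ring
    rcases Nat.lt_or_ge d k with h | h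
    · have hsign : (-1 : ℚ) ^ (k - (d + 1)) = -(-1 : ℚ) ^ (k - d) := by
        have hkd : k - d = (k - (d + 1)) + 1 := by omega
        rw [hkd, pow_succ]; ring
      rw [hp, hsign]; ring
    · have hd' : d = k := by omega
      subst hd'
      simp [Nat.choose_succ_self]
  calc _ = (∑ d ∈ Finset.range (k + 1),
        (((-1 : ℚ) ^ (k + 1 - (d + 1)) * ((k + 1).choose (d + 1) : ℚ) * ((d + 1 : ℕ) : ℚ) ^ n)
        + ((-1 : ℚ) ^ (k - (d + 1)) * (k.choose (d + 1) : ℚ) * ((d + 1 : ℕ) : ℚ) ^ n)))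
        + ((-1 : ℚ) ^ (k + 1 - 0) * ((k + 1).choose 0 : ℚ) * ((0 : ℕ) : ℚ) ^ n
          + (-1 : ℚ) ^ (k - 0) * (k.choose 0 : ℚ) * ((0 : ℕ) : ℚ) ^ n) := by
        rw [Finset.sum_add_distrib]; ring
    _ = ∑ d ∈ Finset.range (k + 1), (-1 : ℚ) ^ (k - d) * (k.choose d : ℚ) * ((d + 1 : ℕ) : ℚ) ^ n := by
        rw [hz, add_zero]
        exact Finset.sum_congr rfl key


lemma Tq_binom (n a : ℕ) :
    ∑ j ∈ Finset.range (n + 1), (n.choose j : ℚ) * Tq j a = Vq n a := by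
  simp only [Tq, Finset.mul_sum]
  rw [Finset.sum_comm]
  rw [Vq]
  refine Finset.sum_congr rfl fun c hc => ?_
  have hb : ((c : ℚ) + 1) ^ n = ∑ j ∈ Finset.range (n + 1), (c : ℚ) ^ j * 1 ^ (n - j) * (n.choose j : ℚ) :=
    add_pow (c : ℚ) 1 n
  push_cast
  rw [hb, Finset.mul_sum]
  refine Finset.sum_congr rfl fun j hj => ?_
  ring

lemma Tq_eq_zero {n k : ℕ} (h : n < k) : Tq n k = 0 := by
  induction n generalizing k with
  | zero =>
    obtain ⟨k', rfl⟩ : ∃ k', k = k' + 1 := ⟨k - 1, by omega⟩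
    have hi := Int.alternating_sum_range_choose_of_ne (n := k' + 1) (by omega)
    have hq : (∑ i ∈ Finset.range (k' + 2), (-1 : ℚ) ^ i * ((k' + 1).choose i : ℚ)) = 0 := by
      exact_mod_cast congrArg (fun x : ℤ => (x : ℚ)) hi
    rw [Tq]
    have : ∀ c ∈ Finset.range (k' + 2),
        (-1 : ℚ) ^ (k' + 1 - c) * ((k' + 1).choose c : ℚ) * (c : ℚ) ^ 0
        = (-1 : ℚ) ^ (k' + 1) * ((-1 : ℚ) ^ c * ((k' + 1).choose c : ℚ)) := by
      intro c hc
      rw [Finset.mem_range] at hc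
      have hsign : (-1 : ℚ) ^ (k' + 1 - c) * (-1 : ℚ) ^ c = (-1 : ℚ) ^ (k' + 1) := by
        rw [← pow_add]
        congr 1
        omega
      have h2 : (-1 : ℚ) ^ (k' + 1 - c) = (-1 : ℚ) ^ (k' + 1) * (-1 : ℚ) ^ c := by
        have hc2 : ((-1 : ℚ) ^ c) * ((-1 : ℚ) ^ c) = 1 := by
          rw [← pow_add]
          exact Even.neg_one_pow ⟨c, rfl⟩
        rw [← hsign, mul_assoc, hc2, mul_one]
      rw [h2, pow_zero]
      ring
    rw [Finset.sum_congr rfl this, ← Finset.mul_sum, hq, mul_zero]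
  | succ n ih =>
    obtain ⟨k', rfl⟩ : ∃ k', k = k' + 1 := ⟨k - 1, by omega⟩
    rw [Tq_succ_succ, ← Tq_add, ih (by omega), ih (by omega), add_zero, mul_zero]

lemma S2_eq_zero {n k : ℕ} (h : n < k) : S2 n k = 0 := by
  rw [S2_eq_Tq, Tq_eq_zero h, mul_zero]

lemma S2_rec (n k : ℕ) : S2 (n + 1) (k + 1) = ((k : ℚ) + 1) * S2 n (k + 1) + S2 n k := by
  have hf : ((k + 1).factorial : ℚ) = ((k : ℚ) + 1) * (k.factorial : ℚ) := by
    rw [Nat.factorial_succ]; push_cast; ring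
  have hk : (k.factorial : ℚ) ≠ 0 := Nat.cast_ne_zero.mpr (Nat.factorial_ne_zero k)
  have hk1 : ((k : ℚ) + 1) ≠ 0 := by positivity
  rw [S2_eq_Tq, S2_eq_Tq, S2_eq_Tq, Tq_succ_succ, ← Tq_add, hf]
  field_simp

lemma S2_shift (n a : ℕ) :
    ∑ j ∈ Finset.range (n + 1), (n.choose j : ℚ) * S2 j a = S2 (n + 1) (a + 1) := by
  have hf : ((a + 1).factorial : ℚ) = ((a : ℚ) + 1) * (a.factorial : ℚ) := by
    rw [Nat.factorial_succ]; push_cast; ring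
  have ha : (a.factorial : ℚ) ≠ 0 := Nat.cast_ne_zero.mpr (Nat.factorial_ne_zero a)
  have ha1 : ((a : ℚ) + 1) ≠ 0 := by positivity
  have : ∑ j ∈ Finset.range (n + 1), (n.choose j : ℚ) * S2 j a
      = 1 / (a.factorial : ℚ) * ∑ j ∈ Finset.range (n + 1), (n.choose j : ℚ) * Tq j a := by
    rw [Finset.mul_sum]
    exact Finset.sum_congr rfl fun j _ => by rw [S2_eq_Tq]; ring
  rw [this, Tq_binom, S2_eq_Tq, Tq_succ_succ, hf]
  field_simp

lemma S2_zero_zero : S2 0 0 = 1 := by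
  simp [S2]

lemma S2_n_zero (n : ℕ) : S2 n 0 = if n = 0 then 1 else 0 := by
  cases n with
  | zero => simp [S2]
  | succ n => simp [S2]


/-- partial sums of alternating harmonic-type series -/
def Hh (n : ℕ) : ℚ := ∑ j ∈ Finset.range (n + 1), (-1 : ℚ) ^ j / ((j : ℚ) + 1)

def Rq (p : ℕ) : ℚ :=
  ∑ n ∈ Finset.range (p + 1), (-1 : ℚ) ^ n * (n.factorial : ℚ) / ((n : ℚ) + 1) * S2 p n

lemma telescope (n : ℕ) :
    ∑ j ∈ Finset.range (n + 1), (-1 : ℚ) ^ j * (j.factorial : ℚ) * S2 n (j + 1)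
      = if n = 1 then 1 else 0 := by
  cases n with
  | zero =>
    rw [Finset.sum_range_one]
    simp [S2_eq_zero (by omega : (0:ℕ) < 1)]
  | succ q =>
    have key : ∀ j ∈ Finset.range (q + 2),
        (-1 : ℚ) ^ j * (j.factorial : ℚ) * S2 (q + 1) (j + 1)
        = ((-1 : ℚ) ^ j * (j.factorial : ℚ) * S2 q j)
          - ((-1 : ℚ) ^ (j + 1) * ((j + 1).factorial : ℚ) * S2 q (j + 1)) := by
      intro j hj
      rw [S2_rec q j]
      have hf : ((j + 1).factorial : ℚ) = ((j : ℚ) + 1) * (j.factorial : ℚ) := by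
        rw [Nat.factorial_succ]; push_cast; ring
      rw [hf, pow_succ]
      ring
    rw [Finset.sum_congr rfl key, Finset.sum_range_sub' (fun j => (-1 : ℚ) ^ j * (j.factorial : ℚ) * S2 q j)]
    rw [S2_eq_zero (by omega : q < q + 2)]
    simp only [pow_zero, Nat.factorial_zero, Nat.cast_one, mul_one, one_mul, mul_zero, sub_zero]
    rw [S2_n_zero]
    by_cases hq : q = 0 <;> simp [hq]

lemma Rq_sum (n : ℕ) :
    ∑ k ∈ Finset.range (n + 1), (n.choose k : ℚ) * Rq k
      = Rq n + (if n = 1 then 1 else 0) := by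
  have step1 : ∀ k ∈ Finset.range (n + 1),
      (n.choose k : ℚ) * Rq k = ∑ j ∈ Finset.range (n + 1),
        (-1 : ℚ) ^ j * (j.factorial : ℚ) / ((j : ℚ) + 1) * ((n.choose k : ℚ) * S2 k j) := by
    intro k hk
    rw [Finset.mem_range] at hk
    rw [Rq, Finset.mul_sum]
    rw [← Finset.sum_subset (Finset.range_subset_range.mpr (by omega : k + 1 ≤ n + 1))]
    · exact Finset.sum_congr rfl fun j _ => by ring
    · intro j hj hj2
      rw [Finset.mem_range] at hj hj2
      rw [S2_eq_zero (by omega : k < j)]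
      ring
  rw [Finset.sum_congr rfl step1, Finset.sum_comm]
  have step2 : ∀ j ∈ Finset.range (n + 1),
      (∑ k ∈ Finset.range (n + 1),
        (-1 : ℚ) ^ j * (j.factorial : ℚ) / ((j : ℚ) + 1) * ((n.choose k : ℚ) * S2 k j))
      = (-1 : ℚ) ^ j * (j.factorial : ℚ) / ((j : ℚ) + 1) * S2 (n + 1) (j + 1) := by
    intro j _
    rw [← Finset.mul_sum, S2_shift]
  rw [Finset.sum_congr rfl step2]
  have step3 : ∀ j ∈ Finset.range (n + 1),
      (-1 : ℚ) ^ j * (j.factorial : ℚ) / ((j : ℚ) + 1) * S2 (n + 1) (j + 1)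
      = (-1 : ℚ) ^ j * (j.factorial : ℚ) * S2 n (j + 1)
        + (-1 : ℚ) ^ j * (j.factorial : ℚ) / ((j : ℚ) + 1) * S2 n j := by
    intro j _
    rw [S2_rec n j]
    have hj1 : ((j : ℚ) + 1) ≠ 0 := by positivity
    field_simp
  rw [Finset.sum_congr rfl step3, Finset.sum_add_distrib, telescope, Rq]
  ring

lemma bernoulli_eq_Rq (p : ℕ) : bernoulli p = Rq p := by
  induction p using Nat.strong_induction_on with
  | _ p ih =>
    cases p with
    | zero =>
      rw [Rq, Finset.sum_range_one]
      simp [S2_zero_zero]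
    | succ q =>
      have hb := sum_bernoulli (q + 2)
      rw [if_neg (by omega)] at hb
      have hr := Rq_sum (q + 2)
      rw [if_neg (by omega), add_zero] at hr
      rw [Finset.sum_range_succ] at hr
      simp only [Nat.choose_self, Nat.cast_one, one_mul] at hr
      have hr' : ∑ k ∈ Finset.range (q + 2), ((q + 2).choose k : ℚ) * Rq k = 0 := by
        linarith
      rw [Finset.sum_range_succ] at hb hr'
      have hsame : ∑ k ∈ Finset.range (q + 1), ((q + 2).choose k : ℚ) * bernoulli k
          = ∑ k ∈ Finset.range (q + 1), ((q + 2).choose k : ℚ) * Rq k := by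
        refine Finset.sum_congr rfl fun k hk => ?_
        rw [Finset.mem_range] at hk
        rw [ih k (by omega)]
      rw [hsame] at hb
      have hc : (((q + 2).choose (q + 1) : ℕ) : ℚ) ≠ 0 := by
        have : (q + 2).choose (q + 1) = q + 2 := by
          rw [Nat.choose_succ_self_right]
        rw [this]
        exact_mod_cast (by omega : (q : ℕ) + 2 ≠ 0)
      have := sub_eq_zero.mpr (hb.trans hr'.symm)
      have h2 : (((q + 2).choose (q + 1) : ℕ) : ℚ) * (bernoulli (q + 1) - Rq (q + 1)) = 0 := by
        ring_nf
        ring_nf at this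
        linarith
      rcases mul_eq_zero.mp h2 with h | h
      · exact absurd h hc
      · linarith [sub_eq_zero.mp h]


def Fq (k : ℕ) : ℚ := ∑ a ∈ Finset.range (k + 1), (a.factorial : ℚ) * S2 k a
def Wq (k : ℕ) : ℚ := ∑ n ∈ Finset.range (k + 1), (n.factorial : ℚ) * Hh n * S2 k n
noncomputable def FBq (k : ℕ) : ℚ :=
  ∑ j ∈ Finset.range (k + 1), (k.choose j : ℚ) * Fq j * bernoulli (k - j)

/-- generic lemma: weighted sums against binomial coefficients shift `S2`. -/
lemma weight_sum (k : ℕ) (w : ℕ → ℚ) :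
    ∑ j ∈ Finset.range (k + 1), (k.choose j : ℚ) * (∑ a ∈ Finset.range (j + 1), w a * S2 j a)
      = ∑ a ∈ Finset.range (k + 1), w a * S2 (k + 1) (a + 1) := by
  have step1 : ∀ j ∈ Finset.range (k + 1),
      (k.choose j : ℚ) * (∑ a ∈ Finset.range (j + 1), w a * S2 j a)
      = ∑ a ∈ Finset.range (k + 1), w a * ((k.choose j : ℚ) * S2 j a) := by
    intro j hj
    rw [Finset.mem_range] at hj
    rw [Finset.mul_sum]
    rw [← Finset.sum_subset (Finset.range_subset_range.mpr (by omega : j + 1 ≤ k + 1))]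
    · exact Finset.sum_congr rfl fun a _ => by ring
    · intro a ha ha2
      rw [Finset.mem_range] at ha ha2
      rw [S2_eq_zero (by omega : j < a)]
      ring
  rw [Finset.sum_congr rfl step1, Finset.sum_comm]
  exact Finset.sum_congr rfl fun a _ => by rw [← Finset.mul_sum, S2_shift]

lemma Fq_sum (k : ℕ) :
    ∑ j ∈ Finset.range (k + 1), (k.choose j : ℚ) * Fq j
      = 2 * Fq k - (if k = 0 then 1 else 0) := by
  have h1 : ∑ j ∈ Finset.range (k + 1), (k.choose j : ℚ) * Fq j
      = ∑ a ∈ Finset.range (k + 1), (a.factorial : ℚ) * S2 (k + 1) (a + 1) := by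
    rw [← weight_sum k (fun a => (a.factorial : ℚ))]
    exact Finset.sum_congr rfl fun j _ => by rw [Fq]
  have h2 : ∀ a ∈ Finset.range (k + 1),
      (a.factorial : ℚ) * S2 (k + 1) (a + 1)
      = ((a + 1).factorial : ℚ) * S2 k (a + 1) + (a.factorial : ℚ) * S2 k a := by
    intro a _
    rw [S2_rec k a]
    have hf : ((a + 1).factorial : ℚ) = ((a : ℚ) + 1) * (a.factorial : ℚ) := by
      rw [Nat.factorial_succ]; push_cast; ring
    rw [hf]; ring
  rw [h1, Finset.sum_congr rfl h2, Finset.sum_add_distrib]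
  have h3 : ∑ a ∈ Finset.range (k + 1), ((a + 1).factorial : ℚ) * S2 k (a + 1)
      = Fq k - (if k = 0 then 1 else 0) := by
    rw [Finset.sum_range_succ, S2_eq_zero (by omega : k < k + 1), mul_zero, add_zero]
    have h4 : Fq k = (∑ a ∈ Finset.range k, ((a + 1).factorial : ℚ) * S2 k (a + 1))
        + (0 : ℕ).factorial * S2 k 0 := by
      rw [Fq]
      exact Finset.sum_range_succ' (fun a => (a.factorial : ℚ) * S2 k a) k
    rw [h4, S2_n_zero]
    simp
  rw [h3, Fq]
  ring

lemma Wq_rel (k : ℕ) :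
    (bernoulli k : ℚ) = 2 * Wq k - ∑ j ∈ Finset.range (k + 1), (k.choose j : ℚ) * Wq j := by
  have h1 : ∑ j ∈ Finset.range (k + 1), (k.choose j : ℚ) * Wq j
      = ∑ n ∈ Finset.range (k + 1), ((n.factorial : ℚ) * Hh n) * S2 (k + 1) (n + 1) := by
    rw [← weight_sum k (fun n => (n.factorial : ℚ) * Hh n)]
    exact Finset.sum_congr rfl fun j _ => rfl
  have h2 : ∀ n ∈ Finset.range (k + 1),
      ((n.factorial : ℚ) * Hh n) * S2 (k + 1) (n + 1)
      = ((n + 1).factorial : ℚ) * Hh n * S2 k (n + 1) + (n.factorial : ℚ) * Hh n * S2 k n := by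
    intro n _
    rw [S2_rec k n]
    have hf : ((n + 1).factorial : ℚ) = ((n : ℚ) + 1) * (n.factorial : ℚ) := by
      rw [Nat.factorial_succ]; push_cast; ring
    rw [hf]; ring
  rw [h1, Finset.sum_congr rfl h2, Finset.sum_add_distrib]
  have key : Wq k - ∑ n ∈ Finset.range (k + 1), ((n + 1).factorial : ℚ) * Hh n * S2 k (n + 1)
      = Rq k := by
    have e1 : Wq k - Rq k
        = ∑ n ∈ Finset.range (k + 1),
            ((n.factorial : ℚ) * (Hh n - (-1 : ℚ) ^ n / ((n : ℚ) + 1))) * S2 k n := by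
      rw [Wq, Rq, ← Finset.sum_sub_distrib]
      exact Finset.sum_congr rfl fun n _ => by ring
    have e2 : ∑ n ∈ Finset.range (k + 1),
          ((n.factorial : ℚ) * (Hh n - (-1 : ℚ) ^ n / ((n : ℚ) + 1))) * S2 k n
        = ∑ i ∈ Finset.range k,
            (((i + 1).factorial : ℚ) * Hh i) * S2 k (i + 1) := by
      rw [Finset.sum_range_succ'
        (fun n => ((n.factorial : ℚ) * (Hh n - (-1 : ℚ) ^ n / ((n : ℚ) + 1))) * S2 k n) k]
      have hz : (((0 : ℕ).factorial : ℚ) * (Hh 0 - (-1 : ℚ) ^ (0:ℕ) / (((0:ℕ) : ℚ) + 1))) * S2 k 0 = 0 := by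
        have : Hh 0 = 1 := by rw [Hh]; simp
        rw [this]
        norm_num
      rw [hz, add_zero]
      refine Finset.sum_congr rfl fun i _ => ?_
      have hh : Hh (i + 1) = Hh i + (-1 : ℚ) ^ (i + 1) / ((i : ℚ) + 2) := by
        rw [Hh, Hh, Finset.sum_range_succ]
        push_cast
        ring
      rw [hh]
      push_cast
      ring
    have e3 : ∑ n ∈ Finset.range (k + 1), ((n + 1).factorial : ℚ) * Hh n * S2 k (n + 1)
        = ∑ i ∈ Finset.range k, (((i + 1).factorial : ℚ) * Hh i) * S2 k (i + 1) := by
      rw [Finset.sum_range_succ, S2_eq_zero (by omega : k < k + 1), mul_zero, add_zero]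
    rw [e3, ← e2, ← e1]
    ring
  have hB : ∑ n ∈ Finset.range (k + 1), (n.factorial : ℚ) * Hh n * S2 k n = Wq k := rfl
  rw [hB, bernoulli_eq_Rq, ← key]
  ring


lemma conv_reflect (k : ℕ) (f g : ℕ → ℚ) :
    ∑ j ∈ Finset.range (k + 1), (k.choose j : ℚ) * f j * g (k - j)
      = ∑ j ∈ Finset.range (k + 1), (k.choose j : ℚ) * f (k - j) * g j := by
  rw [← Finset.sum_range_reflect (fun j => (k.choose j : ℚ) * f j * g (k - j)) (k + 1)]
  refine Finset.sum_congr rfl fun j hj => ?_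
  rw [Finset.mem_range] at hj
  have hj' : j ≤ k := by omega
  simp only [Nat.add_sub_cancel]
  rw [Nat.choose_symm hj', Nat.sub_sub_self hj']

lemma FBq_rel (k : ℕ) :
    (bernoulli k : ℚ) = 2 * FBq k - ∑ j ∈ Finset.range (k + 1), (k.choose j : ℚ) * FBq j := by
  have hFB : FBq k = ∑ s ∈ Finset.range (k + 1), (k.choose s : ℚ) * Fq (k - s) * bernoulli s := by
    rw [FBq]; exact conv_reflect k Fq (fun s => bernoulli s)
  have hstep : ∀ j ∈ Finset.range (k + 1), (k.choose j : ℚ) * FBq j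
      = ∑ s ∈ Finset.range (j + 1),
          (k.choose j : ℚ) * ((j.choose s : ℚ) * Fq (j - s) * bernoulli s) := by
    intro j _
    rw [show FBq j = ∑ s ∈ Finset.range (j + 1), (j.choose s : ℚ) * Fq (j - s) * bernoulli s from
      by rw [FBq]; exact conv_reflect j Fq (fun s => bernoulli s)]
    rw [Finset.mul_sum]
  rw [Finset.sum_congr rfl hstep]
  have swap : ∑ j ∈ Finset.range (k + 1), ∑ s ∈ Finset.range (j + 1),
        (k.choose j : ℚ) * ((j.choose s : ℚ) * Fq (j - s) * bernoulli s)
      = ∑ s ∈ Finset.range (k + 1), ∑ j ∈ Finset.Ico s (k + 1),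
        (k.choose j : ℚ) * ((j.choose s : ℚ) * Fq (j - s) * bernoulli s) := by
    have h := Finset.sum_Ico_Ico_comm 0 (k + 1)
      (fun s j => (k.choose j : ℚ) * ((j.choose s : ℚ) * Fq (j - s) * bernoulli s))
    simp only [← Finset.range_eq_Ico] at h
    rw [← h]
  rw [swap]
  have hinner : ∀ s ∈ Finset.range (k + 1),
      ∑ j ∈ Finset.Ico s (k + 1),
        (k.choose j : ℚ) * ((j.choose s : ℚ) * Fq (j - s) * bernoulli s)
      = (k.choose s : ℚ) * bernoulli s * (2 * Fq (k - s) - (if k - s = 0 then 1 else 0)) := by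
    intro s hs
    rw [Finset.mem_range] at hs
    have hsk : s ≤ k := by omega
    rw [Finset.sum_Ico_eq_sum_range]
    have hrange : k + 1 - s = (k - s) + 1 := by omega
    rw [hrange]
    have hterm : ∀ i ∈ Finset.range ((k - s) + 1),
        (k.choose (s + i) : ℚ) * (((s + i).choose s : ℚ) * Fq ((s + i) - s) * bernoulli s)
        = (k.choose s : ℚ) * bernoulli s * ((((k - s).choose i : ℕ) : ℚ) * Fq i) := by
      intro i hi
      rw [Finset.mem_range] at hi
      have h1 : (s + i) - s = i := by omega
      have h2 : k.choose (s + i) * (s + i).choose s = k.choose s * (k - s).choose i := by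
        have := Nat.choose_mul (n := k) (by omega : s ≤ s + i)
        rwa [h1] at this
      have h2q : (k.choose (s + i) : ℚ) * ((s + i).choose s : ℚ) = (k.choose s : ℚ) * ((k - s).choose i : ℚ) := by
        exact_mod_cast congrArg (fun x : ℕ => (x : ℚ)) h2
      rw [h1]
      calc (k.choose (s + i) : ℚ) * (((s + i).choose s : ℚ) * Fq i * bernoulli s)
          = ((k.choose (s + i) : ℚ) * ((s + i).choose s : ℚ)) * Fq i * bernoulli s := by ring
        _ = ((k.choose s : ℚ) * ((k - s).choose i : ℚ)) * Fq i * bernoulli s := by rw [h2q]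
        _ = _ := by ring
    rw [Finset.sum_congr rfl hterm, ← Finset.mul_sum, Fq_sum (k - s)]
  rw [Finset.sum_congr rfl hinner]
  have hsplit : ∑ s ∈ Finset.range (k + 1),
      (k.choose s : ℚ) * bernoulli s * (2 * Fq (k - s) - (if k - s = 0 then 1 else 0))
      = 2 * (∑ s ∈ Finset.range (k + 1), (k.choose s : ℚ) * Fq (k - s) * bernoulli s)
        - ∑ s ∈ Finset.range (k + 1), (k.choose s : ℚ) * bernoulli s * (if k - s = 0 then 1 else 0) := by
    rw [Finset.mul_sum, ← Finset.sum_sub_distrib]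
    exact Finset.sum_congr rfl fun s _ => by ring
  rw [hsplit]
  have hlast : ∑ s ∈ Finset.range (k + 1),
      (k.choose s : ℚ) * bernoulli s * (if k - s = 0 then 1 else 0) = bernoulli k := by
    rw [Finset.sum_range_succ]
    have hz : ∀ s ∈ Finset.range k,
        (k.choose s : ℚ) * bernoulli s * (if k - s = 0 then 1 else 0) = 0 := by
      intro s hs
      rw [Finset.mem_range] at hs
      rw [if_neg (by omega : ¬(k - s = 0))]
      ring
    rw [Finset.sum_eq_zero hz, zero_add, Nat.sub_self, if_pos rfl, Nat.choose_self]
    push_cast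
    ring
  rw [hlast, ← hFB]
  ring

lemma FBq_eq_Wq (k : ℕ) : FBq k = Wq k := by
  induction k using Nat.strong_induction_on with
  | _ k ih =>
    have h1 := FBq_rel k
    have h2 := Wq_rel k
    rw [Finset.sum_range_succ] at h1 h2
    have hsame : ∑ j ∈ Finset.range k, (k.choose j : ℚ) * FBq j
        = ∑ j ∈ Finset.range k, (k.choose j : ℚ) * Wq j := by
      refine Finset.sum_congr rfl fun j hj => ?_
      rw [Finset.mem_range] at hj
      rw [ih j hj]
    rw [hsame] at h1
    rw [Nat.choose_self] at h1 h2
    push_cast at h1 h2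
    linarith


lemma neg_one_pow_sub {j n : ℕ} (h : j ≤ n) :
    (-1 : ℝ) ^ (n - j) = (-1 : ℝ) ^ n * (-1 : ℝ) ^ j := by
  have hjj : (-1 : ℝ) ^ j * (-1 : ℝ) ^ j = 1 := by
    rw [← pow_add]; exact Even.neg_one_pow ⟨j, rfl⟩
  have hs : (-1 : ℝ) ^ (n - j) * (-1 : ℝ) ^ j = (-1 : ℝ) ^ n := by
    rw [← pow_add]; congr 1; omega
  calc (-1 : ℝ) ^ (n - j) = (-1 : ℝ) ^ (n - j) * ((-1 : ℝ) ^ j * (-1 : ℝ) ^ j) := by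
        rw [hjj, mul_one]
    _ = ((-1 : ℝ) ^ (n - j) * (-1 : ℝ) ^ j) * (-1 : ℝ) ^ j := by ring
    _ = _ := by rw [hs]

lemma ynum_half (n : ℕ) :
    ynum n (1 / 2 : ℝ) = -(2 : ℝ) ^ (n + 2) * ((Hh n : ℚ) : ℝ) := by
  have hcast : ((Hh n : ℚ) : ℝ) = ∑ j ∈ Finset.range (n + 1), (-1 : ℝ) ^ j / ((j : ℝ) + 1) := by
    rw [Hh]
    push_cast
    rfl
  rw [ynum, hcast, Finset.mul_sum]
  refine Finset.sum_congr rfl fun j hj => ?_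
  rw [Finset.mem_range] at hj
  have hj' : j ≤ n := by omega
  rw [show (1 / 2 - 1 : ℝ) = -(1 / 2) by norm_num,
    neg_pow ((1:ℝ) / 2) (n + 1 - j), neg_one_pow_sub (by omega : j ≤ n + 1)]
  have hpow : (1 / 2 : ℝ) ^ (j + 1) * (1 / 2 : ℝ) ^ (n + 1 - j) = (1 / 2 : ℝ) ^ (n + 2) := by
    rw [← pow_add]; congr 1; omega
  have hj1 : ((j : ℝ) + 1) ≠ 0 := by positivity
  have h2n : (2 : ℝ) ^ (n + 2) * (1 / 2 : ℝ) ^ (n + 2) = 1 := by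
    rw [← mul_pow]; norm_num
  have hjj : (-1 : ℝ) ^ j * (-1 : ℝ) ^ j = 1 := by
    rw [← pow_add]; exact Even.neg_one_pow ⟨j, rfl⟩
  have hns : (-1 : ℝ) ^ (n + 1) = -(-1 : ℝ) ^ n := by
    rw [pow_succ]; ring
  have hD : ((j : ℝ) + 1) * (1 / 2 : ℝ) ^ (j + 1)
      * ((-1 : ℝ) ^ (n + 1) * (-1 : ℝ) ^ j * (1 / 2 : ℝ) ^ (n + 1 - j)) ≠ 0 := by
    refine mul_ne_zero (mul_ne_zero hj1 (by positivity)) ?_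
    refine mul_ne_zero (mul_ne_zero ?_ ?_) (by positivity) <;>
      exact pow_ne_zero _ (by norm_num)
  rw [← mul_div_assoc, div_eq_div_iff hD hj1, hns]
  linear_combination (-((2:ℝ) ^ (n + 2) * ((j : ℝ) + 1) * (-1 : ℝ) ^ n * (1 / 2 : ℝ) ^ (j + 1)
      * (1 / 2 : ℝ) ^ (n + 1 - j))) * hjj
    + (-((2:ℝ) ^ (n + 2) * ((j : ℝ) + 1) * (-1 : ℝ) ^ n)) * hpow
    + (-(((j : ℝ) + 1) * (-1 : ℝ) ^ n)) * h2n

lemma ab_half (i : ℕ) :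
    apostolBernoulli (i + 1) (1 / 2 : ℝ) = -2 * ((i : ℝ) + 1) * ((Fq i : ℚ) : ℝ) := by
  rw [apostolBernoulli, if_neg (Nat.succ_ne_zero i)]
  have hFcast : ((Fq i : ℚ) : ℝ)
      = ∑ c ∈ Finset.range (i + 1), (c.factorial : ℝ) * ((S2 i c : ℚ) : ℝ) := by
    rw [Fq]
    push_cast
    rfl
  rw [hFcast, Finset.mul_sum, Finset.mul_sum]
  simp only [Nat.add_sub_cancel]
  refine Finset.sum_congr rfl fun c hc => ?_
  rw [Finset.mem_range] at hc
  have hc' : c ≤ i := by omega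
  have hz : (1 / 2 : ℝ) ^ ((c : ℤ) - 1) = 2 * (1 / 2 : ℝ) ^ c := by
    rw [zpow_sub₀ (by norm_num : (1 / 2 : ℝ) ≠ 0), zpow_one, zpow_natCast]
    field_simp
  rw [show (1 / 2 - 1 : ℝ) = -(1 / 2) by norm_num, hz,
    neg_pow ((1:ℝ) / 2) (i - c), neg_pow ((1:ℝ) / 2) (i + 1),
    neg_one_pow_sub hc']
  have hp : (1 / 2 : ℝ) ^ c * (1 / 2 : ℝ) ^ (i - c) = (1 / 2 : ℝ) ^ i := by
    rw [← pow_add]; congr 1; omega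
  have hq : (1 / 2 : ℝ) ^ (i + 1) = (1 / 2 : ℝ) ^ i * (1 / 2 : ℝ) := pow_succ _ _
  have hns : (-1 : ℝ) ^ (i + 1) = -(-1 : ℝ) ^ i := by rw [pow_succ]; ring
  have hyy : (-1 : ℝ) ^ c * (-1 : ℝ) ^ c = 1 := by
    rw [← pow_add]; exact Even.neg_one_pow ⟨c, rfl⟩
  rw [hns, hq]
  have hB : -(-1 : ℝ) ^ i * ((1 / 2 : ℝ) ^ i * (1 / 2 : ℝ)) ≠ 0 := by
    refine mul_ne_zero (neg_ne_zero.mpr (pow_ne_zero _ (by norm_num))) (by positivity)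
  rw [div_mul_eq_mul_div, div_eq_iff hB]
  push_cast
  linear_combination (((i:ℝ) + 1) * (c.factorial : ℝ) * ((S2 i c : ℚ) : ℝ) * (-1:ℝ)^i
      * (1/2:ℝ)^c * (1/2:ℝ)^(i-c)) * hyy
    + (((i:ℝ) + 1) * (c.factorial : ℝ) * ((S2 i c : ℚ) : ℝ) * (-1:ℝ)^i) * hp

theorem stmt_14 (m : ℕ) (hm : 1 ≤ m) :
    ∑ n ∈ Finset.range (m + 1),
        (m.choose n : ℝ) * apostolBernoulli n (1 / 2) * (bernoulli (m - n) : ℝ) =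
      (m : ℝ) * ∑ n ∈ Finset.range m,
        ((n.factorial : ℝ) / 2 ^ (n + 1)) * ynum n (1 / 2) * (S2 (m - 1) n : ℝ) := by
  obtain ⟨k, rfl⟩ : ∃ k, m = k + 1 := ⟨m - 1, by omega⟩
  have hab0 : apostolBernoulli 0 (1 / 2 : ℝ) = 0 := by rw [apostolBernoulli]; simp
  rw [Finset.sum_range_succ'
    (fun n => ((k + 1).choose n : ℝ) * apostolBernoulli n (1 / 2) * (bernoulli (k + 1 - n) : ℝ))
    (k + 1)]
  rw [hab0]
  simp only [mul_zero, zero_mul, add_zero]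
  have hterm : ∀ i ∈ Finset.range (k + 1),
      ((k + 1).choose (i + 1) : ℝ) * apostolBernoulli (i + 1) (1 / 2)
        * (bernoulli (k + 1 - (i + 1)) : ℝ)
      = (-2) * ((k : ℝ) + 1) * (((k.choose i : ℚ) * Fq i * bernoulli (k - i) : ℚ) : ℝ) := by
    intro i hi
    rw [ab_half i, Nat.succ_sub_succ]
    have hch : ((k + 1).choose (i + 1) : ℝ) * ((i : ℝ) + 1) = ((k : ℝ) + 1) * (k.choose i : ℝ) := by
      exact_mod_cast congrArg (fun x : ℕ => (x : ℝ)) (Nat.add_one_mul_choose_eq k i).symm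
    push_cast
    linear_combination ((-2 : ℝ) * ((Fq i : ℚ) : ℝ) * ((bernoulli (k - i) : ℚ) : ℝ)) * hch
  rw [Finset.sum_congr rfl hterm, ← Finset.mul_sum]
  have hR : ∀ n ∈ Finset.range (k + 1),
      ((n.factorial : ℝ) / 2 ^ (n + 1)) * ynum n (1 / 2) * ((S2 (k + 1 - 1) n : ℚ) : ℝ)
      = (-2) * (((n.factorial : ℚ) * Hh n * S2 k n : ℚ) : ℝ) := by
    intro n _
    rw [ynum_half n, show k + 1 - 1 = k from rfl]
    have h2 : (2 : ℝ) ^ (n + 2) = 2 ^ (n + 1) * 2 := pow_succ _ _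
    have h2n : (2 : ℝ) ^ (n + 1) ≠ 0 := by positivity
    rw [h2]
    push_cast
    field_simp
  rw [Finset.sum_congr rfl hR]
  have hcast1 : ∑ i ∈ Finset.range (k + 1), (((k.choose i : ℚ) * Fq i * bernoulli (k - i) : ℚ) : ℝ)
      = ((FBq k : ℚ) : ℝ) := by
    rw [FBq]
    push_cast
    rfl
  have hcast2 : ∑ n ∈ Finset.range (k + 1),
      (-2 : ℝ) * (((n.factorial : ℚ) * Hh n * S2 k n : ℚ) : ℝ)
      = (-2 : ℝ) * ((Wq k : ℚ) : ℝ) := by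
    rw [← Finset.mul_sum, Wq]
    push_cast
    rfl
  rw [hcast1, hcast2, FBq_eq_Wq k]
  push_cast
  ring
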